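/- Let {x_j} and {y_j} be normalized tight frames for Hilbert spaces H and K respectively, and suppose {x_j ⊕ y_j} is a normalized tight frame for the closed span of {x_j ⊕ y_j} in H ⊕ K. Then the closed linear span of {x_j ⊕ y_j} is all of H ⊕ K, and moreover Σ_j ⟨x, x_j⟩ y_j = 0 for every x ∈ H and Σ_j ⟨y, y_j⟩ x_j = 0 for every y ∈ K. -/

import Mathlib

open scoped InnerProductSpace

/-- If `{x_j}` and `{y_j}` are normalized tight frames of `H` and `K` and the inner sum
`{x_j ⊕ y_j}` is a normalized tight frame for its closed linear span in `H ⊕ K`, then this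
span is all of `H ⊕ K` and `Σ_j ⟨x, x_j⟩ y_j = 0`, `Σ_j ⟨y, y_j⟩ x_j = 0`. -/
theorem stmt10 {H K : Type*} [NormedAddCommGroup H] [InnerProductSpace ℂ H] [CompleteSpace H]
    [NormedAddCommGroup K] [InnerProductSpace ℂ K] [CompleteSpace K]
    (x : ℕ → H) (y : ℕ → K)
    (hx : ∀ v : H, HasSum (fun j => ⟪x j, v⟫_ℂ • x j) v)
    (hy : ∀ w : K, HasSum (fun j => ⟪y j, w⟫_ℂ • y j) w)
    (z : ℕ → WithLp 2 (H × K))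
    (hz : ∀ j, z j = (WithLp.equiv 2 (H × K)).symm (x j, y j))
    (htight : ∀ w ∈ (Submodule.span ℂ (Set.range z)).topologicalClosure,
      HasSum (fun j => ⟪z j, w⟫_ℂ • z j) w) :
    (Submodule.span ℂ (Set.range z)).topologicalClosure = ⊤ ∧
      (∀ v : H, HasSum (fun j => ⟪x j, v⟫_ℂ • y j) 0) ∧
      (∀ w : K, HasSum (fun j => ⟪y j, w⟫_ℂ • x j) 0) := by
  set M := (Submodule.span ℂ (Set.range z)).topologicalClosure with hM
  have hMc : IsClosed (M : Set (WithLp 2 (H × K))) := Submodule.isClosed_topologicalClosure _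
  haveI : CompleteSpace M := hMc.completeSpace_coe
  have hzM : ∀ j, z j ∈ M := fun j =>
    Submodule.le_topologicalClosure _ (Submodule.subset_span (Set.mem_range_self j))
  have hzfst : ∀ j, (z j).fst = x j := fun j => by rw [hz j]; rfl
  have hzsnd : ∀ j, (z j).snd = y j := fun j => by rw [hz j]; rfl
  have key : ∀ u : WithLp 2 (H × K),
      HasSum (fun j => ⟪z j, u⟫_ℂ • z j)
        ((Submodule.orthogonalProjectionOnto M u : M) : WithLp 2 (H × K)) := by
    intro u
    have h := htight _ (Submodule.orthogonalProjectionOnto M u).2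
    have hinner : ∀ j,
        ⟪z j, ((Submodule.orthogonalProjectionOnto M u : M) : WithLp 2 (H × K))⟫_ℂ = ⟪z j, u⟫_ℂ := by
      intro j
      have h0 : ⟪z j, u - ((Submodule.orthogonalProjectionOnto M u : M) : WithLp 2 (H × K))⟫_ℂ = 0 :=
        Submodule.inner_right_of_mem_orthogonal (hzM j)
          (Submodule.sub_starProjection_mem_orthogonal (K := M) u)
      rw [inner_sub_right, sub_eq_zero] at h0
      exact h0.symm
    simpa only [hinner] using h
  set L1 : WithLp 2 (H × K) →L[ℂ] H :=
    (ContinuousLinearMap.fst ℂ H K).comp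
      (WithLp.prodContinuousLinearEquiv 2 ℂ H K).toContinuousLinearMap with hL1
  set L2 : WithLp 2 (H × K) →L[ℂ] K :=
    (ContinuousLinearMap.snd ℂ H K).comp
      (WithLp.prodContinuousLinearEquiv 2 ℂ H K).toContinuousLinearMap with hL2
  have hL1app : ∀ a : WithLp 2 (H × K), L1 a = a.fst := fun a => rfl
  have hL2app : ∀ a : WithLp 2 (H × K), L2 a = a.snd := fun a => rfl
  have mainH : ∀ v : H, ((WithLp.equiv 2 (H × K)).symm (v, (0 : K)) ∈ M) ∧
      HasSum (fun j => ⟪x j, v⟫_ℂ • y j) 0 := by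
    intro v
    set u := (WithLp.equiv 2 (H × K)).symm (v, (0 : K)) with hu
    have hinnu : ∀ j, ⟪z j, u⟫_ℂ = ⟪x j, v⟫_ℂ := by
      intro j
      rw [WithLp.prod_inner_apply, WithLp.ofLp_fst, WithLp.ofLp_snd, hzfst, hzsnd]
      simp [hu]
    have hk := key u
    set P := ((Submodule.orthogonalProjectionOnto M u : M) : WithLp 2 (H × K)) with hP
    have h1 : HasSum (fun j => ⟪x j, v⟫_ℂ • x j) P.fst := by
      have := hk.mapL L1
      simpa only [map_smul, hL1app, WithLp.smul_fst, hzfst, hinnu] using this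
    have h2 : HasSum (fun j => ⟪x j, v⟫_ℂ • y j) P.snd := by
      have := hk.mapL L2
      simpa only [map_smul, hL2app, WithLp.smul_snd, hzsnd, hinnu] using this
    have hPfst : P.fst = v := h1.unique (hx v)
    have hPsnd : P.snd = 0 := by
      have horth : ⟪P, u - P⟫_ℂ = 0 :=
        Submodule.inner_right_of_mem_orthogonal (Submodule.orthogonalProjectionOnto M u).2
          (Submodule.sub_starProjection_mem_orthogonal (K := M) u)
      rw [WithLp.prod_inner_apply, WithLp.ofLp_fst, WithLp.ofLp_snd, WithLp.ofLp_fst, WithLp.ofLp_snd, WithLp.sub_fst, WithLp.sub_snd, hPfst] at horth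
      have hufst : u.fst = v := rfl
      have husnd : u.snd = 0 := rfl
      rw [hufst, husnd, sub_self, inner_zero_right, zero_add, zero_sub,
        inner_neg_right, neg_eq_zero, inner_self_eq_zero] at horth
      exact horth
    have huP : u = P := by
      have : (WithLp.equiv 2 (H × K)) P = (v, (0 : K)) := by
        rw [Prod.ext_iff]
        exact ⟨hPfst, hPsnd⟩
      rw [hu, ← this, Equiv.symm_apply_apply]
    refine ⟨?_, ?_⟩
    · rw [huP]; exact (Submodule.orthogonalProjectionOnto M u).2
    · rw [← hPsnd]; exact h2
  have mainK : ∀ w : K, ((WithLp.equiv 2 (H × K)).symm ((0 : H), w) ∈ M) ∧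
      HasSum (fun j => ⟪y j, w⟫_ℂ • x j) 0 := by
    intro w
    set u := (WithLp.equiv 2 (H × K)).symm ((0 : H), w) with hu
    have hinnu : ∀ j, ⟪z j, u⟫_ℂ = ⟪y j, w⟫_ℂ := by
      intro j
      rw [WithLp.prod_inner_apply, WithLp.ofLp_fst, WithLp.ofLp_snd, hzfst, hzsnd]
      simp [hu]
    have hk := key u
    set P := ((Submodule.orthogonalProjectionOnto M u : M) : WithLp 2 (H × K)) with hP
    have h1 : HasSum (fun j => ⟪y j, w⟫_ℂ • y j) P.snd := by
      have := hk.mapL L2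
      simpa only [map_smul, hL2app, WithLp.smul_snd, hzsnd, hinnu] using this
    have h2 : HasSum (fun j => ⟪y j, w⟫_ℂ • x j) P.fst := by
      have := hk.mapL L1
      simpa only [map_smul, hL1app, WithLp.smul_fst, hzfst, hinnu] using this
    have hPsnd : P.snd = w := h1.unique (hy w)
    have hPfst : P.fst = 0 := by
      have horth : ⟪P, u - P⟫_ℂ = 0 :=
        Submodule.inner_right_of_mem_orthogonal (Submodule.orthogonalProjectionOnto M u).2
          (Submodule.sub_starProjection_mem_orthogonal (K := M) u)
      rw [WithLp.prod_inner_apply, WithLp.ofLp_fst, WithLp.ofLp_snd, WithLp.ofLp_fst, WithLp.ofLp_snd, WithLp.sub_fst, WithLp.sub_snd, hPsnd] at horth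
      have hufst : u.fst = 0 := rfl
      have husnd : u.snd = w := rfl
      rw [hufst, husnd, sub_self, inner_zero_right, add_zero, zero_sub,
        inner_neg_right, neg_eq_zero, inner_self_eq_zero] at horth
      exact horth
    have huP : u = P := by
      have : (WithLp.equiv 2 (H × K)) P = ((0 : H), w) := by
        rw [Prod.ext_iff]
        exact ⟨hPfst, hPsnd⟩
      rw [hu, ← this, Equiv.symm_apply_apply]
    refine ⟨?_, ?_⟩
    · rw [huP]; exact (Submodule.orthogonalProjectionOnto M u).2
    · rw [← hPfst]; exact h2
  refine ⟨?_, fun v => (mainH v).2, fun w => (mainK w).2⟩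
  rw [Submodule.eq_top_iff']
  intro u
  have hdecomp : u = (WithLp.equiv 2 (H × K)).symm (u.fst, (0 : K)) +
      (WithLp.equiv 2 (H × K)).symm ((0 : H), u.snd) := by
    apply (WithLp.equiv 2 (H × K)).injective
    rw [WithLp.equiv_apply, WithLp.equiv_apply, WithLp.ofLp_add]
    ext <;> simp
  rw [hdecomp]
  exact M.add_mem (mainH u.fst).1 (mainK u.snd).1
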